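/- Let n be a positive integer, C an additive category, E : C^op × C → Ab a biadditive functor, A, C objects of C, and δ ∈ E(C,A). Let ⟨X•,δ⟩ and ⟨Y•,δ⟩ be n-exangles with X^0 = Y^0 = A and X^{n+1} = Y^{n+1} = C, and let f• : X• → Y• be a morphism of complexes with f^0 = id_A and f^{n+1} = id_C. If there exists at least one morphism of complexes y• : Y• → X• with y^0 = id_A and y^{n+1} = id_C, then f• is a homotopy equivalence in C_{(A,C)}, i.e. there exists g• : Y• → X• with g^0 = id_A, g^{n+1} = id_C, such that g•∘f• and f•∘g• are homotopic to the respective identities. -/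

import Mathlib

/-!
Basic definitions for the theory of `n`-exangulated categories
(Herschend–Liu–Nakaoka): `(n+2)`-term complexes in an additive category,
morphisms of such complexes, homotopies, and homotopy equivalences.

A complex is recorded as a function `obj : ℕ → C` together with differentials
`d i : obj i ⟶ obj (i+1)`; only the components in degrees `0, …, n+1`
(and the differentials `d 0, …, d n`) are relevant, which is why all
conditions are imposed only in that range.
-/

open CategoryTheory CategoryTheory.Limits Opposite

universe w v u

namespace NExangulated

variable (C : Type u) [Category.{v} C] [Preadditive C]

/-- An `(n+2)`-term complex `X^0 → X^1 → ⋯ → X^{n+1}` in `C`. -/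
structure NComplex (n : ℕ) where
  /-- the objects; only `obj 0, …, obj (n+1)` are relevant -/
  obj : ℕ → C
  /-- the differentials -/
  d : ∀ i : ℕ, obj i ⟶ obj (i + 1)
  /-- `d^{i+1} ∘ d^i = 0` for `0 ≤ i ≤ n-1` -/
  d_comp_d : ∀ i : ℕ, i + 1 ≤ n → d i ≫ d (i + 1) = 0

variable {C}
variable {n : ℕ}

/-- A morphism of `(n+2)`-term complexes. -/
structure NComplexHom (X Y : NComplex C n) where
  /-- the components; only `f 0, …, f (n+1)` are relevant -/
  f : ∀ i : ℕ, X.obj i ⟶ Y.obj i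
  /-- compatibility with the differentials, for `0 ≤ i ≤ n` -/
  comm : ∀ i : ℕ, i ≤ n → f i ≫ Y.d i = X.d i ≫ f (i + 1)

/-- The identity morphism of complexes. -/
def NComplexHom.id (X : NComplex C n) : NComplexHom X X where
  f _ := 𝟙 _
  comm _ _ := by simp

/-- Composition of morphisms of complexes (in diagrammatic order:
`f.comp g` is `g• ∘ f•`). -/
def NComplexHom.comp {X Y Z : NComplex C n} (f : NComplexHom X Y) (g : NComplexHom Y Z) :
    NComplexHom X Z where
  f i := f.f i ≫ g.f i
  comm i hi := by
    rw [Category.assoc, g.comm i hi, ← Category.assoc, f.comm i hi, Category.assoc]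

/-- `φ` is a homotopy from `f` to `g`:  here `φ i : X^{i+1} ⟶ Y^i` plays the role of
the component `φ^{i+1}` (for `0 ≤ i ≤ n`, i.e. `1 ≤ i+1 ≤ n+1`). -/
def IsHomotopy {X Y : NComplex C n} (f g : NComplexHom X Y)
    (φ : ∀ i : ℕ, X.obj (i + 1) ⟶ Y.obj i) : Prop :=
  (g.f 0 - f.f 0 = X.d 0 ≫ φ 0) ∧
    (∀ i : ℕ, i + 1 ≤ n →
      g.f (i + 1) - f.f (i + 1) = φ i ≫ Y.d i + X.d (i + 1) ≫ φ (i + 1)) ∧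
    (g.f (n + 1) - f.f (n + 1) = φ n ≫ Y.d n)

/-- Two morphisms of complexes are homotopic. -/
def Homotopic {X Y : NComplex C n} (f g : NComplexHom X Y) : Prop :=
  ∃ φ, IsHomotopy f g φ

/-- `g` is a homotopy inverse of `f`. -/
def IsHomotopyInverse {X Y : NComplex C n} (f : NComplexHom X Y) (g : NComplexHom Y X) : Prop :=
  Homotopic (f.comp g) (NComplexHom.id X) ∧ Homotopic (g.comp f) (NComplexHom.id Y)

/-- `f` is a homotopy equivalence of complexes. -/
def IsHomotopyEquiv {X Y : NComplex C n} (f : NComplexHom X Y) : Prop :=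
  ∃ g, IsHomotopyInverse f g

/-- Exactness of a two-term sequence of (pointed) sets at the middle term:
the image of `f` equals the kernel of `g`. -/
def ExactAt {α β γ : Type*} [Zero γ] (f : α → β) (g : β → γ) : Prop :=
  ∀ b : β, g b = 0 ↔ ∃ a : α, f a = b

end NExangulated
namespace NExangulated

variable {C : Type u} [Category.{v} C] [Preadditive C] {n : ℕ}

section E

variable (E : Cᵒᵖ ⥤ C ⥤ AddCommGrpCat.{w})

/-- `a_*δ := E(id, a)(δ)`. -/
def pushE {A A' B : C} (a : A ⟶ A') (δ : (E.obj (op B)).obj A) : (E.obj (op B)).obj A' :=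
  (E.obj (op B)).map a δ

/-- `c^*δ := E(c, id)(δ)`. -/
def pullE {A B B' : C} (c : B' ⟶ B) (δ : (E.obj (op B)).obj A) : (E.obj (op B')).obj A :=
  (E.map c.op).app A δ

/-- `⟨X, δ⟩` is an `E`-attached complex: `(d^0)_*δ = 0` and `(d^n)^*δ = 0`. -/
def IsAttached (X : NComplex C n) (δ : (E.obj (op (X.obj (n + 1)))).obj (X.obj 0)) : Prop :=
  pushE E (X.d 0) δ = 0 ∧ pullE E (X.d n) δ = 0

/-- `⟨X, δ⟩` is an `n`-exangle: for every object `Q` the two induced sequences of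
abelian groups
`C(Q,X^0) → ⋯ → C(Q,X^{n+1}) → E(Q,X^0)` and
`C(X^{n+1},Q) → ⋯ → C(X^0,Q) → E(X^{n+1},Q)`
are exact at every term having both an incoming and an outgoing map. -/
def IsExangle (X : NComplex C n) (δ : (E.obj (op (X.obj (n + 1)))).obj (X.obj 0)) : Prop :=
  (∀ Q : C,
      (∀ i : ℕ, i + 1 ≤ n →
        ExactAt (fun u : Q ⟶ X.obj i => u ≫ X.d i)
          (fun u : Q ⟶ X.obj (i + 1) => u ≫ X.d (i + 1))) ∧
      ExactAt (fun u : Q ⟶ X.obj n => u ≫ X.d n)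
        (fun u : Q ⟶ X.obj (n + 1) => pullE E u δ)) ∧
  (∀ Q : C,
      (∀ i : ℕ, i + 1 ≤ n →
        ExactAt (fun u : X.obj (i + 2) ⟶ Q => X.d (i + 1) ≫ u)
          (fun u : X.obj (i + 1) ⟶ Q => X.d i ≫ u)) ∧
      ExactAt (fun u : X.obj 1 ⟶ Q => X.d 0 ≫ u)
        (fun u : X.obj 0 ⟶ Q => pushE E u δ))

end E

end NExangulated
namespace NExangulated

variable {C : Type u} [Category.{v} C] [Preadditive C] [HasFiniteBiproducts C] {n : ℕ}

section Aux

lemma homotopic_of_eq {X Y : NComplex C n} {f g : NComplexHom X Y}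
    (h : ∀ i, f.f i = g.f i) : Homotopic f g := by
  refine ⟨fun _ => 0, ?_, fun i hi => ?_, ?_⟩ <;> simp [h]

lemma homotopic_symm {X Y : NComplex C n} {f g : NComplexHom X Y}
    (h : Homotopic f g) : Homotopic g f := by
  obtain ⟨φ, h0, hmid, htop⟩ := h
  refine ⟨fun i => -φ i, ?_, fun i hi => ?_, ?_⟩
  · rw [show f.f 0 - g.f 0 = -(g.f 0 - f.f 0) by abel, h0]; simp
  · rw [show f.f (i+1) - g.f (i+1) = -(g.f (i+1) - f.f (i+1)) by abel, hmid i hi]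
    simp; abel
  · rw [show f.f (n+1) - g.f (n+1) = -(g.f (n+1) - f.f (n+1)) by abel, htop]; simp

lemma homotopic_trans {X Y : NComplex C n} {f g h : NComplexHom X Y}
    (h1 : Homotopic f g) (h2 : Homotopic g h) : Homotopic f h := by
  obtain ⟨φ, a0, amid, atop⟩ := h1
  obtain ⟨χ, b0, bmid, btop⟩ := h2
  refine ⟨fun i => φ i + χ i, ?_, fun i hi => ?_, ?_⟩
  · rw [show h.f 0 - f.f 0 = (g.f 0 - f.f 0) + (h.f 0 - g.f 0) by abel, a0, b0]
    simp [Preadditive.comp_add]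
  · rw [show h.f (i+1) - f.f (i+1)
        = (g.f (i+1) - f.f (i+1)) + (h.f (i+1) - g.f (i+1)) by abel,
      amid i hi, bmid i hi]
    simp [Preadditive.comp_add, Preadditive.add_comp]; abel
  · rw [show h.f (n+1) - f.f (n+1)
        = (g.f (n+1) - f.f (n+1)) + (h.f (n+1) - g.f (n+1)) by abel, atop, btop]
    simp [Preadditive.add_comp]

lemma homotopic_whisker_left {W X Y : NComplex C n} (u : NComplexHom W X)
    {f g : NComplexHom X Y} (h : Homotopic f g) :
    Homotopic (u.comp f) (u.comp g) := by
  obtain ⟨φ, a0, amid, atop⟩ := h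
  refine ⟨fun i => u.f (i+1) ≫ φ i, ?_, fun i hi => ?_, ?_⟩
  · show u.f 0 ≫ g.f 0 - u.f 0 ≫ f.f 0 = W.d 0 ≫ u.f (0+1) ≫ φ 0
    rw [← Preadditive.comp_sub, a0, ← Category.assoc, u.comm 0 (Nat.zero_le n),
      Category.assoc]
  · show u.f (i+1) ≫ g.f (i+1) - u.f (i+1) ≫ f.f (i+1)
      = (u.f (i+1) ≫ φ i) ≫ Y.d i + W.d (i+1) ≫ u.f (i+1+1) ≫ φ (i+1)
    rw [← Preadditive.comp_sub, amid i hi, Preadditive.comp_add, ← Category.assoc,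
      ← Category.assoc (u.f (i+1)), u.comm (i+1) hi, Category.assoc,
      Category.assoc]
  · show u.f (n+1) ≫ g.f (n+1) - u.f (n+1) ≫ f.f (n+1)
      = (u.f (n+1) ≫ φ n) ≫ Y.d n
    rw [← Preadditive.comp_sub, atop, ← Category.assoc]

lemma homotopic_whisker_right {X Y Z : NComplex C n} {f g : NComplexHom X Y}
    (h : Homotopic f g) (v : NComplexHom Y Z) :
    Homotopic (f.comp v) (g.comp v) := by
  obtain ⟨φ, a0, amid, atop⟩ := h
  refine ⟨fun i => φ i ≫ v.f i, ?_, fun i hi => ?_, ?_⟩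
  · show g.f 0 ≫ v.f 0 - f.f 0 ≫ v.f 0 = X.d 0 ≫ φ 0 ≫ v.f 0
    rw [← Preadditive.sub_comp, a0, Category.assoc]
  · show g.f (i+1) ≫ v.f (i+1) - f.f (i+1) ≫ v.f (i+1)
      = (φ i ≫ v.f i) ≫ Z.d i + X.d (i+1) ≫ φ (i+1) ≫ v.f (i+1)
    rw [← Preadditive.sub_comp, amid i hi, Preadditive.add_comp, Category.assoc,
      ← v.comm i (Nat.le_of_succ_le hi), ← Category.assoc (φ i),
      Category.assoc (X.d (i+1))]
  · show g.f (n+1) ≫ v.f (n+1) - f.f (n+1) ≫ v.f (n+1)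
      = (φ n ≫ v.f n) ≫ Z.d n
    rw [← Preadditive.sub_comp, atop, Category.assoc, ← v.comm n le_rfl,
      ← Category.assoc]

/-- Inductive construction of the "partial homotopy" `ψ` for a chain
endomorphism `t` vanishing in degrees `0` and `n+1`. -/
lemma exists_psi (Z : NComplex C n)
    (hex : ∀ i : ℕ, i + 1 ≤ n →
      ExactAt (fun u : Z.obj (i+1) ⟶ Z.obj i => u ≫ Z.d i)
        (fun u : Z.obj (i+1) ⟶ Z.obj (i+1) => u ≫ Z.d (i+1)))
    (t : ∀ i, Z.obj i ⟶ Z.obj i)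
    (hcomm : ∀ i, i ≤ n → t i ≫ Z.d i = Z.d i ≫ t (i+1))
    (htop : t (n+1) = 0) :
    ∃ ψ : ∀ i, Z.obj (i+1) ⟶ Z.obj i,
      (∀ i, n ≤ i → ψ i = 0) ∧
      ∀ k, k + 1 ≤ n → t (k+1) = ψ k ≫ Z.d k + Z.d (k+1) ≫ ψ (k+1) := by
  suffices h : ∀ m : ℕ, ∃ ψ : ∀ i, Z.obj (i+1) ⟶ Z.obj i,
      (∀ i, n ≤ i → ψ i = 0) ∧
      ∀ k, n ≤ k + m → k + 1 ≤ n →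
        t (k+1) = ψ k ≫ Z.d k + Z.d (k+1) ≫ ψ (k+1) by
    obtain ⟨ψ, h0, h1⟩ := h n
    exact ⟨ψ, h0, fun k hk => h1 k (by omega) hk⟩
  intro m
  induction m with
  | zero =>
    exact ⟨fun _ => 0, fun _ _ => rfl, fun k h1 h2 => absurd h1 (by omega)⟩
  | succ m ih =>
    obtain ⟨ψ, hψ0, hψ⟩ := ih
    by_cases hmn : m + 1 ≤ n
    · set k₀ := n - m - 1 with hk₀def
      have hk₀ : k₀ + m + 1 = n := by omega
      have hb : (t (k₀+1) - Z.d (k₀+1) ≫ ψ (k₀+1)) ≫ Z.d (k₀+1) = 0 := by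
        rw [Preadditive.sub_comp, Category.assoc, hcomm (k₀+1) (by omega)]
        by_cases hcase : k₀ + 1 = n
        · have h1 : t (k₀ + 1 + 1) = 0 := by
            rw [show k₀ + 1 + 1 = n + 1 by omega]; exact htop
          have h2 : ψ (k₀ + 1) = 0 := hψ0 _ (by omega)
          rw [h1, h2]; simp
        · have h1 : t (k₀ + 1 + 1)
              = ψ (k₀+1) ≫ Z.d (k₀+1) + Z.d (k₀+1+1) ≫ ψ (k₀+1+1) :=
            hψ (k₀+1) (by omega) (by omega)
          have hz : Z.d (k₀+1) ≫ Z.d (k₀+1+1) ≫ ψ (k₀+1+1) = 0 := by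
            rw [← Category.assoc, Z.d_comp_d (k₀+1) (by omega), zero_comp]
          rw [h1, Preadditive.comp_add, hz, add_zero, sub_self]
      obtain ⟨a, ha⟩ := (hex k₀ (by omega) _).mp hb
      have ha' : a ≫ Z.d k₀ = t (k₀+1) - Z.d (k₀+1) ≫ ψ (k₀+1) := ha
      refine ⟨Function.update ψ k₀ a, fun i hi => ?_, fun k hk1 hk2 => ?_⟩
      · rw [Function.update_of_ne (by omega)]; exact hψ0 i hi
      · by_cases hk : k = k₀
        · subst hk
          rw [Function.update_self, Function.update_of_ne (by omega), ha']
          abel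
        · have hk' : k₀ < k := by omega
          rw [Function.update_of_ne (by omega), Function.update_of_ne (by omega)]
          exact hψ k (by omega) hk2
    · exact ⟨ψ, hψ0, fun k hk1 hk2 => hψ k (by omega) hk2⟩

/-- The key lemma: an endomorphism of an `n`-exangle-like complex which is the
identity in degrees `0` and `n+1` has a two-sided homotopy inverse with the
same property. -/
lemma key (Z : NComplex C n)
    (hex : ∀ i : ℕ, i + 1 ≤ n →
      ExactAt (fun u : Z.obj (i+1) ⟶ Z.obj i => u ≫ Z.d i)
        (fun u : Z.obj (i+1) ⟶ Z.obj (i+1) => u ≫ Z.d (i+1)))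
    (e : NComplexHom Z Z) (he0 : e.f 0 = 𝟙 _) (he1 : e.f (n+1) = 𝟙 _) :
    ∃ e' : NComplexHom Z Z, e'.f 0 = 𝟙 _ ∧ e'.f (n+1) = 𝟙 _ ∧
      Homotopic (e.comp e') (NComplexHom.id Z) ∧
      Homotopic (e'.comp e) (NComplexHom.id Z) := by
  set t : ∀ i, Z.obj i ⟶ Z.obj i := fun i => 𝟙 _ - e.f i with ht
  have hcomm : ∀ i, i ≤ n → t i ≫ Z.d i = Z.d i ≫ t (i+1) := fun i hi => by
    simp only [ht, Preadditive.sub_comp, Preadditive.comp_sub, Category.id_comp,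
      Category.comp_id, e.comm i hi]
  have ht0 : t 0 = 0 := by simp [ht, he0]
  have htop : t (n+1) = 0 := by simp [ht, he1]
  obtain ⟨ψ, hψ0, hψ⟩ := exists_psi Z hex t hcomm htop
  have main : ∀ w : NComplexHom Z Z,
      (∀ i, (NComplexHom.id Z).f i - w.f i = t i ≫ t i) →
      Homotopic w (NComplexHom.id Z) := by
    intro w hw
    refine ⟨fun i => ψ i ≫ t i, ?_, fun i hi => ?_, ?_⟩
    · rw [hw 0]; simp [ht0]
    · rw [hw (i+1)]
      show t (i+1) ≫ t (i+1)
        = (ψ i ≫ t i) ≫ Z.d i + Z.d (i+1) ≫ ψ (i+1) ≫ t (i+1)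
      nth_rewrite 1 [hψ i hi]
      rw [Preadditive.add_comp, Category.assoc, Category.assoc,
        ← hcomm i (Nat.le_of_succ_le hi), ← Category.assoc]
    · rw [hw (n+1)]; simp [htop, hψ0 n le_rfl]
  refine ⟨⟨fun i => 𝟙 _ + t i, fun i hi => ?_⟩, ?_, ?_, ?_, ?_⟩
  · simp only [Preadditive.add_comp, Preadditive.comp_add, Category.id_comp,
      Category.comp_id, hcomm i hi]
  · simp [ht0]
  · simp [htop]
  · refine main _ fun i => ?_
    show 𝟙 _ - e.f i ≫ (𝟙 _ + t i) = t i ≫ t i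
    simp only [ht, Preadditive.comp_add, Preadditive.comp_sub,
      Preadditive.sub_comp, Category.comp_id, Category.id_comp]
    abel
  · refine main _ fun i => ?_
    show 𝟙 _ - (𝟙 _ + t i) ≫ e.f i = t i ≫ t i
    simp only [ht, Preadditive.comp_add, Preadditive.comp_sub,
      Preadditive.sub_comp, Preadditive.add_comp, Category.comp_id,
      Category.id_comp]
    abel

end Aux

/-- Let `⟨X•,δ⟩` and `⟨Y•,δ⟩` be `n`-exangles with the same
ends `A`, `C` and the same extension `δ`, and let `f• : X• → Y•` be a morphism
of complexes with `f^0 = id_A`, `f^{n+1} = id_C`.  If there exists at least one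
morphism of complexes `Y• → X•` with identity end components, then `f•` is a
homotopy equivalence in `C_{(A,C)}`. -/
theorem statement_8 (hn : 0 < n) (E : Cᵒᵖ ⥤ C ⥤ AddCommGrpCat.{w})
    [E.Additive] [∀ B : Cᵒᵖ, (E.obj B).Additive]
    (X Y : NComplex C n)
    (h0 : Y.obj 0 = X.obj 0) (htop : Y.obj (n + 1) = X.obj (n + 1))
    (δ : (E.obj (op (X.obj (n + 1)))).obj (X.obj 0))
    (hXe : IsExangle E X δ)
    (hYe : IsExangle E Y (pullE E (eqToHom htop) (pushE E (eqToHom h0.symm) δ)))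
    (f : NComplexHom X Y)
    (hf0 : f.f 0 = eqToHom h0.symm) (hftop : f.f (n + 1) = eqToHom htop.symm)
    (y : NComplexHom Y X)
    (hy0 : y.f 0 = eqToHom h0) (hytop : y.f (n + 1) = eqToHom htop) :
    ∃ g : NComplexHom Y X, g.f 0 = eqToHom h0 ∧ g.f (n + 1) = eqToHom htop ∧
      Homotopic (f.comp g) (NComplexHom.id X) ∧ Homotopic (g.comp f) (NComplexHom.id Y) := by
  have hXex : ∀ i : ℕ, i + 1 ≤ n →
      ExactAt (fun u : X.obj (i+1) ⟶ X.obj i => u ≫ X.d i)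
        (fun u : X.obj (i+1) ⟶ X.obj (i+1) => u ≫ X.d (i+1)) :=
    fun i hi => (hXe.1 (X.obj (i+1))).1 i hi
  have hYex : ∀ i : ℕ, i + 1 ≤ n →
      ExactAt (fun u : Y.obj (i+1) ⟶ Y.obj i => u ≫ Y.d i)
        (fun u : Y.obj (i+1) ⟶ Y.obj (i+1) => u ≫ Y.d (i+1)) :=
    fun i hi => (hYe.1 (Y.obj (i+1))).1 i hi
  obtain ⟨e', he'0, he'1, hXa, hXb⟩ := key X hXex (f.comp y)
    (by simp [NComplexHom.comp, hf0, hy0])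
    (by simp [NComplexHom.comp, hftop, hytop])
  obtain ⟨e₂', _, _, hYa, hYb⟩ := key Y hYex (y.comp f)
    (by simp [NComplexHom.comp, hf0, hy0])
    (by simp [NComplexHom.comp, hftop, hytop])
  set g := y.comp e' with hg
  have part1 : Homotopic (f.comp g) (NComplexHom.id X) :=
    homotopic_trans
      (homotopic_of_eq (fun i => by simp [hg, NComplexHom.comp])) hXa
  refine ⟨g, by simp [hg, NComplexHom.comp, hy0, he'0],
    by simp [hg, NComplexHom.comp, hytop, he'1], part1, ?_⟩
  set h := e₂'.comp y with hh
  have step1 : Homotopic (h.comp f) (NComplexHom.id Y) :=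
    homotopic_trans
      (homotopic_of_eq (fun i => by simp [hh, NComplexHom.comp])) hYb
  have step2 : Homotopic g h := by
    have a := homotopic_whisker_right step1 g
    have b : Homotopic ((NComplexHom.id Y).comp g) g :=
      homotopic_of_eq (fun i => by simp [NComplexHom.comp, NComplexHom.id])
    have c : Homotopic ((h.comp f).comp g) (h.comp (f.comp g)) :=
      homotopic_of_eq (fun i => by simp [NComplexHom.comp])
    have d := homotopic_whisker_left h part1
    have e : Homotopic (h.comp (NComplexHom.id X)) h :=
      homotopic_of_eq (fun i => by simp [NComplexHom.comp, NComplexHom.id])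
    exact homotopic_trans (homotopic_symm (homotopic_trans a b))
      (homotopic_trans c (homotopic_trans d e))
  exact homotopic_trans (homotopic_whisker_right step2 f) step1

end NExangulated
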